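/- Let d ≥ 1 and s ≥ 1 be integers, let L = (l_0, …, l_{s+1}) be any sequence of quantization levels, and set τ_j = l_{j+1} − l_j for j = 0, …, s. For every nonzero v ∈ ℝ^d, E[‖Q_s(v) − v‖²] ≤ ε_LP · ‖v‖², where ε_LP is the supremum of Σ_{j=0}^s τ_j² x_j / 4 over all x = (x_0, …, x_s) ∈ ℝ^{s+1} satisfying x_j ≥ 0 for all j, Σ_{j=0}^s x_j ≤ d, and d − Σ_{k=0}^j x_k ≤ (1/l_{j+1})² for j = 0, …, s−1. -/

import Mathlib

open MeasureTheory Real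

noncomputable section

/-- The index of the quantization bin containing the normalized coordinate `r`. -/
def levIdx (l : ℕ → ℝ) (s : ℕ) (r : ℝ) : ℕ := sSup {j | j ≤ s ∧ l j ≤ r}

/-- The probability of rounding the normalized coordinate `r` up to the next level. -/
def quantP (l : ℕ → ℝ) (s : ℕ) (r : ℝ) : ℝ :=
  (r - l (levIdx l s r)) / (l (levIdx l s r + 1) - l (levIdx l s r))

/-- The (random) nonuniform quantization of `v`, driven by the uniform noise vector `u`:
coordinate `i` is `‖v‖ · sign vᵢ · hᵢ`, where `hᵢ` is the upper adjacent level with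
probability `p(rᵢ)` and the lower adjacent level otherwise. -/
def quant (l : ℕ → ℝ) (s : ℕ) {d : ℕ} (v : EuclideanSpace ℝ (Fin d))
    (u : Fin d → ℝ) : EuclideanSpace ℝ (Fin d) :=
  WithLp.toLp 2 fun i =>
    ‖v‖ * Real.sign (v i) *
      (if u i ≤ quantP l s (|v i| / ‖v‖)
       then l (levIdx l s (|v i| / ‖v‖) + 1)
       else l (levIdx l s (|v i| / ‖v‖)))

/-- The uniform probability measure on the cube `[0,1]^d`, driving the quantization noise. -/
def unifCube (d : ℕ) : Measure (Fin d → ℝ) :=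
  Measure.pi fun _ => volume.restrict (Set.Icc (0:ℝ) 1)

/-- `l` is a valid sequence of quantization levels `l 0 = 0 < l 1 < ⋯ < l (s+1) = 1`. -/
def IsLevels (l : ℕ → ℝ) (s : ℕ) : Prop :=
  l 0 = 0 ∧ l (s+1) = 1 ∧ ∀ j ≤ s, l j < l (j+1)

/-- The exponentially spaced NUQSGD levels `(0, 2^{-s}, 2^{1-s}, …, 2^{-1}, 1)`:
`l 0 = 0` and `l j = 2^{j-1-s}` for `j = 1, …, s+1`. -/
def nuqLevels (s : ℕ) : ℕ → ℝ :=
  fun j => if j = 0 then 0 else 2 ^ ((j : ℤ) - 1 - (s : ℤ))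

/-! ### Auxiliary lemmas -/

lemma levels_mono {l : ℕ → ℝ} {s : ℕ} (hl : IsLevels l s) {a b : ℕ} (hab : a ≤ b)
    (hb : b ≤ s + 1) : l a ≤ l b := by
  induction b with
  | zero => simp_all
  | succ n ih =>
    rcases Nat.eq_or_lt_of_le hab with h | h
    · rw [h]
    · have ha : a ≤ n := Nat.lt_succ_iff.mp h
      have hn : n ≤ s := Nat.succ_le_succ_iff.mp hb
      exact (ih ha (hn.trans (Nat.le_succ s))).trans (hl.2.2 n hn).le

lemma levIdx_spec {l : ℕ → ℝ} {s : ℕ} (hl : IsLevels l s) {r : ℝ} (hr : 0 ≤ r) :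
    levIdx l s r ≤ s ∧ l (levIdx l s r) ≤ r := by
  have h0 : (0:ℕ) ∈ {j | j ≤ s ∧ l j ≤ r} := ⟨Nat.zero_le _, by rw [hl.1]; exact hr⟩
  have hbdd : BddAbove {j | j ≤ s ∧ l j ≤ r} := ⟨s, fun j hj => hj.1⟩
  exact Nat.sSup_mem ⟨0, h0⟩ hbdd

lemma levIdx_upper {l : ℕ → ℝ} {s : ℕ} (hl : IsLevels l s) {r : ℝ} (hr0 : 0 ≤ r)
    (hr1 : r ≤ 1) : r ≤ l (levIdx l s r + 1) := by
  by_cases h : levIdx l s r + 1 ≤ s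
  · by_contra hc
    push_neg at hc
    have hmem : levIdx l s r + 1 ∈ {j | j ≤ s ∧ l j ≤ r} := ⟨h, hc.le⟩
    have hbdd : BddAbove {j | j ≤ s ∧ l j ≤ r} := ⟨s, fun j hj => hj.1⟩
    have := le_csSup hbdd hmem
    simp only [levIdx] at this
    omega
  · have h1 := (levIdx_spec hl hr0).1
    have : levIdx l s r = s := by omega
    rw [this, hl.2.1]; exact hr1

instance : IsProbabilityMeasure (volume.restrict (Set.Icc (0:ℝ) 1)) :=
  ⟨by rw [Measure.restrict_apply_univ, Real.volume_Icc]; norm_num⟩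

instance (d : ℕ) : IsProbabilityMeasure (unifCube d) := by
  unfold unifCube; infer_instance

lemma pi_map_eval {d : ℕ} (i : Fin d) :
    (unifCube d).map (fun u => u i) = volume.restrict (Set.Icc (0:ℝ) 1) := by
  ext A hA
  rw [Measure.map_apply (measurable_pi_apply i) hA]
  have hpre : (fun u : Fin d → ℝ => u i) ⁻¹' A =
      Set.pi Set.univ (Function.update (fun _ => Set.univ) i A) := by
    rw [Set.eval_preimage]
  rw [hpre, unifCube, Measure.pi_pi]
  rw [Finset.prod_eq_single i]
  · simp
  · intro b _ hb
    simp [Function.update_of_ne hb]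
  · simp

lemma integrable_ite_const (p C D : ℝ) :
    Integrable (fun t => if t ≤ p then C else D) (volume.restrict (Set.Icc (0:ℝ) 1)) := by
  have heq : (fun t : ℝ => if t ≤ p then C else D) =
      fun t => (Set.Iic p).indicator (fun _ => C - D) t + D := by
    funext t
    by_cases h : t ≤ p <;> simp [Set.indicator, h]
  rw [heq]
  exact ((integrable_const (C - D)).indicator measurableSet_Iic).add (integrable_const D)

lemma integrable_eval_ite {d : ℕ} (p C D : ℝ) (i : Fin d) :
    Integrable (fun u : Fin d → ℝ => if u i ≤ p then C else D) (unifCube d) := by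
  have hg : Measurable (fun t : ℝ => if t ≤ p then C else D) :=
    Measurable.ite measurableSet_Iic measurable_const measurable_const
  exact (integrable_map_measure hg.aestronglyMeasurable
    (measurable_pi_apply i).aemeasurable).mp
    (by rw [pi_map_eval i]; exact integrable_ite_const p C D)

lemma integral_eval_ite {d : ℕ} (p C D : ℝ) (i : Fin d) :
    ∫ u : Fin d → ℝ, (if u i ≤ p then C else D) ∂(unifCube d) =
      ∫ t in Set.Icc (0:ℝ) 1, (if t ≤ p then C else D) := by
  have hg : Measurable (fun t : ℝ => if t ≤ p then C else D) :=
    Measurable.ite measurableSet_Iic measurable_const measurable_const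
  rw [← pi_map_eval i, integral_map (measurable_pi_apply i).aemeasurable
    hg.aestronglyMeasurable]

lemma integral_ite (p C D : ℝ) (hp0 : 0 ≤ p) (hp1 : p ≤ 1) :
    ∫ t in Set.Icc (0:ℝ) 1, (if t ≤ p then C else D) = p * C + (1 - p) * D := by
  have hsplit : Set.Icc (0:ℝ) 1 = Set.Icc 0 p ∪ Set.Ioc p 1 :=
    (Set.Icc_union_Ioc_eq_Icc hp0 hp1).symm
  have hdisj : Disjoint (Set.Icc (0:ℝ) p) (Set.Ioc p 1) := by
    apply Set.disjoint_left.mpr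
    intro t ht1 ht2
    exact absurd ht1.2 (not_le.mpr ht2.1)
  rw [hsplit, setIntegral_union hdisj measurableSet_Ioc
    ((integrable_ite_const p C D).mono_measure
      (Measure.restrict_mono (by rw [hsplit]; exact Set.subset_union_left) le_rfl))
    ((integrable_ite_const p C D).mono_measure
      (Measure.restrict_mono (by rw [hsplit]; exact Set.subset_union_right) le_rfl))]
  have h1 : ∫ t in Set.Icc 0 p, (if t ≤ p then C else D) = ∫ t in Set.Icc 0 p, C := by
    apply setIntegral_congr_fun measurableSet_Icc
    intro t ht; exact if_pos ht.2
  have h2 : ∫ t in Set.Ioc p 1, (if t ≤ p then C else D) = ∫ t in Set.Ioc p 1, D := by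
    apply setIntegral_congr_fun measurableSet_Ioc
    intro t ht; exact if_neg (not_le.mpr ht.1)
  rw [h1, h2, setIntegral_const, setIntegral_const, Real.volume_real_Icc_of_le hp0, Real.volume_real_Ioc_of_le hp1]
  simp only [smul_eq_mul]
  ring

lemma alg_bound (p A B r : ℝ) (hp0 : 0 ≤ p) (hp1 : p ≤ 1) (hr : r - B = p * (A - B)) :
    p * (A - r)^2 + (1 - p) * (B - r)^2 ≤ (A - B)^2 / 4 := by
  have hA : A - r = (1 - p) * (A - B) := by linarith
  have hB : B - r = -(p * (A - B)) := by linarith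
  rw [hA, hB]
  nlinarith [sq_nonneg ((A - B) * (1 - 2*p))]

set_option maxHeartbeats 1000000 in
/-- **Theorem 6 (LP bound)**: for any levels `L`, with `τⱼ = l_{j+1} − lⱼ`,
`E[‖Q_s(v) − v‖²] ≤ ε_LP ‖v‖²`, where `ε_LP` is the optimal value of the linear program
`max Σⱼ τⱼ² xⱼ/4` subject to `xⱼ ≥ 0`, `Σⱼ xⱼ ≤ d`, and
`d − Σ_{k=0}^{j} x_k ≤ (1/l_{j+1})²` for `j = 0, …, s−1`. -/
theorem nuq_variance_LP_bound (d s : ℕ) (hd : 1 ≤ d) (hs : 1 ≤ s)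
    (l : ℕ → ℝ) (hl : IsLevels l s)
    (v : EuclideanSpace ℝ (Fin d)) (hv : v ≠ 0) :
    (∫ u, ‖quant l s v u - v‖ ^ 2 ∂(unifCube d)) ≤
      sSup {y : ℝ | ∃ x : ℕ → ℝ,
        (∀ j ≤ s, 0 ≤ x j) ∧
        (∑ j ∈ Finset.range (s + 1), x j ≤ (d:ℝ)) ∧
        (∀ j < s, (d:ℝ) - ∑ k ∈ Finset.range (j + 1), x k ≤ (1 / l (j + 1)) ^ 2) ∧
        y = ∑ j ∈ Finset.range (s + 1), (l (j + 1) - l j) ^ 2 * x j / 4} * ‖v‖ ^ 2 := by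
  have hNpos : (0:ℝ) < ‖v‖ := norm_pos_iff.mpr hv
  -- abbreviations
  set N : ℝ := ‖v‖ with hNdef
  let r : Fin d → ℝ := fun i => |v i| / N
  let J : Fin d → ℕ := fun i => levIdx l s (r i)
  let p : Fin d → ℝ := fun i => quantP l s (r i)
  let A : Fin d → ℝ := fun i => l (J i + 1)
  let B : Fin d → ℝ := fun i => l (J i)
  let C : Fin d → ℝ := fun i => (N * Real.sign (v i) * A i - v i)^2
  let D : Fin d → ℝ := fun i => (N * Real.sign (v i) * B i - v i)^2
  have hr0 : ∀ i, 0 ≤ r i := fun i => div_nonneg (abs_nonneg _) hNpos.le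
  have hsumsq : ∑ i, (v i)^2 = N^2 := by
    rw [hNdef, EuclideanSpace.norm_eq,
      Real.sq_sqrt (Finset.sum_nonneg fun i _ => sq_nonneg _)]
    simp [Real.norm_eq_abs, sq_abs]
  have hr1 : ∀ i, r i ≤ 1 := by
    intro i
    rw [div_le_one hNpos]
    have h1 : (v i)^2 ≤ N^2 := by
      rw [← hsumsq]
      exact Finset.single_le_sum (fun j _ => sq_nonneg (v j)) (Finset.mem_univ i)
    calc |v i| = Real.sqrt ((v i)^2) := (Real.sqrt_sq_eq_abs _).symm
      _ ≤ Real.sqrt (N^2) := Real.sqrt_le_sqrt h1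
      _ = N := Real.sqrt_sq hNpos.le
  have hJs : ∀ i, J i ≤ s := fun i => (levIdx_spec hl (hr0 i)).1
  have hBr : ∀ i, B i ≤ r i := fun i => (levIdx_spec hl (hr0 i)).2
  have hrA : ∀ i, r i ≤ A i := fun i => levIdx_upper hl (hr0 i) (hr1 i)
  have hBA : ∀ i, B i < A i := fun i => hl.2.2 (J i) (hJs i)
  have hp0 : ∀ i, 0 ≤ p i := fun i =>
    div_nonneg (sub_nonneg.mpr (hBr i)) (sub_nonneg.mpr (hBA i).le)
  have hp1 : ∀ i, p i ≤ 1 := fun i =>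
    (div_le_one (sub_pos.mpr (hBA i))).mpr (by linarith [hrA i, hBA i])
  have hpr : ∀ i, r i - B i = p i * (A i - B i) := fun i =>
    (div_mul_cancel₀ _ (sub_ne_zero.mpr (hBA i).ne')).symm
  -- pointwise identity
  have hpt : ∀ u : Fin d → ℝ, ‖quant l s v u - v‖ ^ 2 =
      ∑ i, (if u i ≤ p i then C i else D i) := by
    intro u
    rw [EuclideanSpace.norm_eq,
      Real.sq_sqrt (Finset.sum_nonneg fun i _ => sq_nonneg _)]
    refine Finset.sum_congr rfl fun i _ => ?_
    rw [PiLp.sub_apply, Real.norm_eq_abs, sq_abs]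
    show (quant l s v u i - v i)^2 = _
    by_cases h : u i ≤ p i
    · rw [if_pos h]
      have : quant l s v u i = N * Real.sign (v i) * A i := by
        simp only [quant]
        rw [if_pos h]
      rw [this]
    · rw [if_neg h]
      have : quant l s v u i = N * Real.sign (v i) * B i := by
        simp only [quant]
        rw [if_neg h]
      rw [this]
  -- compute the integral
  have hint : (∫ u, ‖quant l s v u - v‖ ^ 2 ∂(unifCube d)) =
      ∑ i, (p i * C i + (1 - p i) * D i) := by
    calc (∫ u, ‖quant l s v u - v‖ ^ 2 ∂(unifCube d))
        = ∫ u, ∑ i, (if u i ≤ p i then C i else D i) ∂(unifCube d) := by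
          exact integral_congr_ae (Filter.Eventually.of_forall hpt)
      _ = ∑ i, ∫ u : Fin d → ℝ, (if u i ≤ p i then C i else D i) ∂(unifCube d) :=
          integral_finset_sum _ (fun i _ => integrable_eval_ite (p i) (C i) (D i) i)
      _ = ∑ i, (p i * C i + (1 - p i) * D i) := by
          refine Finset.sum_congr rfl fun i _ => ?_
          rw [integral_eval_ite, integral_ite _ _ _ (hp0 i) (hp1 i)]
  -- per-coordinate bound
  have hcoord : ∀ i, p i * C i + (1 - p i) * D i ≤ N^2 * (A i - B i)^2 / 4 := by
    intro i
    by_cases hvi : v i = 0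
    · have hsign : Real.sign (v i) = 0 := by rw [hvi, Real.sign_zero]
      have hC : C i = 0 := by simp [C, hsign, hvi]
      have hD : D i = 0 := by simp [D, hsign, hvi]
      rw [hC, hD]
      have hpos : (0:ℝ) ≤ N^2 * (A i - B i)^2 / 4 := by positivity
      linarith
    · have hvabs : |v i| = N * r i := by
        show |v i| = N * (|v i| / N)
        field_simp
      have hCD : C i = N^2 * (A i - r i)^2 ∧ D i = N^2 * (B i - r i)^2 := by
        rcases lt_or_gt_of_ne hvi with h | h
        · have hsgn : Real.sign (v i) = -1 := Real.sign_of_neg h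
          have hv' : v i = -(N * r i) := by
            rw [← hvabs, abs_of_neg h]; ring
          constructor
          · show (N * Real.sign (v i) * A i - v i)^2 = _
            rw [hsgn, hv']; ring
          · show (N * Real.sign (v i) * B i - v i)^2 = _
            rw [hsgn, hv']; ring
        · have hsgn : Real.sign (v i) = 1 := Real.sign_of_pos h
          have hv' : v i = N * r i := by
            rw [← hvabs, abs_of_pos h]
          constructor
          · show (N * Real.sign (v i) * A i - v i)^2 = _
            rw [hsgn, hv']; ring
          · show (N * Real.sign (v i) * B i - v i)^2 = _
            rw [hsgn, hv']; ring
      obtain ⟨hC, hD⟩ := hCD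
      rw [hC, hD]
      have hab := alg_bound (p i) (A i) (B i) (r i) (hp0 i) (hp1 i) (hpr i)
      nlinarith [sq_nonneg N]
  -- the feasible point
  let x : ℕ → ℝ := fun j => ((Finset.univ.filter (fun i : Fin d => J i = j)).card : ℝ)
  have hmaps : ∀ i ∈ (Finset.univ : Finset (Fin d)), J i ∈ Finset.range (s + 1) :=
    fun i _ => Finset.mem_range.mpr (Nat.lt_succ_of_le (hJs i))
  -- sum rearrangement
  have hfiber : ∑ i, N^2 * (A i - B i)^2 / 4 =
      ∑ j ∈ Finset.range (s + 1), (l (j + 1) - l j)^2 * x j / 4 * N^2 := by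
    rw [← Finset.sum_fiberwise_of_maps_to hmaps (fun i => N^2 * (A i - B i)^2 / 4)]
    refine Finset.sum_congr rfl fun j _ => ?_
    have : ∑ i ∈ Finset.univ.filter (fun i : Fin d => J i = j),
        N^2 * (A i - B i)^2 / 4 =
        ∑ _i ∈ Finset.univ.filter (fun i : Fin d => J i = j),
        N^2 * (l (j + 1) - l j)^2 / 4 := by
      refine Finset.sum_congr rfl fun i hi => ?_
      have hij : J i = j := (Finset.mem_filter.mp hi).2
      simp only [A, B, hij]
    rw [this, Finset.sum_const, nsmul_eq_mul]
    show (x j) * _ = _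
    ring
  -- the feasible point is in the LP set
  have hy : (∑ j ∈ Finset.range (s + 1), (l (j + 1) - l j)^2 * x j / 4) ∈
      {y : ℝ | ∃ x : ℕ → ℝ,
        (∀ j ≤ s, 0 ≤ x j) ∧
        (∑ j ∈ Finset.range (s + 1), x j ≤ (d:ℝ)) ∧
        (∀ j < s, (d:ℝ) - ∑ k ∈ Finset.range (j + 1), x k ≤ (1 / l (j + 1)) ^ 2) ∧
        y = ∑ j ∈ Finset.range (s + 1), (l (j + 1) - l j) ^ 2 * x j / 4} := by
    refine ⟨x, fun j _ => Nat.cast_nonneg _, ?_, ?_, rfl⟩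
    · have := Finset.card_eq_sum_card_fiberwise hmaps
      simp only [Finset.card_univ, Fintype.card_fin] at this
      rw [show (∑ j ∈ Finset.range (s+1), x j) =
          ((∑ j ∈ Finset.range (s+1), (Finset.univ.filter (fun i : Fin d => J i = j)).card : ℕ) : ℝ) by
        push_cast; rfl]
      rw [← this]
    · intro j hj
      -- partial sums count coordinates with J i ≤ j
      have hcard : ∑ k ∈ Finset.range (j + 1), x k =
          ((Finset.univ.filter (fun i : Fin d => J i ≤ j)).card : ℝ) := by
        have hm2 : ∀ i ∈ Finset.univ.filter (fun i : Fin d => J i ≤ j),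
            J i ∈ Finset.range (j + 1) :=
          fun i hi => Finset.mem_range.mpr (Nat.lt_succ_of_le (Finset.mem_filter.mp hi).2)
        rw [Finset.card_eq_sum_card_fiberwise hm2]
        push_cast
        refine Finset.sum_congr rfl fun k hk => ?_
        have hkj : k ≤ j := Nat.lt_succ_iff.mp (Finset.mem_range.mp hk)
        have hset : (Finset.univ.filter (fun i : Fin d => J i ≤ j)).filter
            (fun i : Fin d => J i = k) = Finset.univ.filter (fun i : Fin d => J i = k) := by
          rw [Finset.filter_filter]
          refine Finset.filter_congr fun i _ => ?_
          constructor
          · exact fun h => h.2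
          · exact fun h => ⟨h ▸ hkj, h⟩
        rw [hset]
      rw [hcard]
      have hsplitc := Finset.card_filter_add_card_filter_not
        (s := (Finset.univ : Finset (Fin d))) (p := fun i : Fin d => J i ≤ j)
      have hdcard : (d:ℝ) - ((Finset.univ.filter (fun i : Fin d => J i ≤ j)).card : ℝ) =
          ((Finset.univ.filter (fun i : Fin d => ¬ J i ≤ j)).card : ℝ) := by
        simp only [Finset.card_univ, Fintype.card_fin] at hsplitc
        have : ((Finset.univ.filter (fun i : Fin d => J i ≤ j)).card : ℝ) +
            ((Finset.univ.filter (fun i : Fin d => ¬ J i ≤ j)).card : ℝ) = (d:ℝ) := by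
          exact_mod_cast congrArg (Nat.cast : ℕ → ℝ) hsplitc
        linarith
      rw [hdcard]
      -- each such coordinate has r i ≥ l (j+1) > 0
      have hc : 0 < l (j + 1) := by
        have h0j : l 0 ≤ l j := levels_mono hl (Nat.zero_le j) (by omega)
        have := hl.2.2 j (le_of_lt hj)
        rw [hl.1] at h0j
        linarith
      have hrsum : ∑ i, (r i)^2 = 1 := by
        have : ∀ i, (r i)^2 = (v i)^2 / N^2 := by
          intro i
          rw [div_pow, sq_abs]
        simp_rw [this]
        rw [← Finset.sum_div, hsumsq, div_self (by positivity)]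
      set T := Finset.univ.filter (fun i : Fin d => ¬ J i ≤ j) with hT
      have hbound : (T.card : ℝ) * (l (j + 1))^2 ≤ 1 := by
        calc (T.card : ℝ) * (l (j + 1))^2 = ∑ _i ∈ T, (l (j + 1))^2 := by
              rw [Finset.sum_const, nsmul_eq_mul]
          _ ≤ ∑ i ∈ T, (r i)^2 := by
              refine Finset.sum_le_sum fun i hi => ?_
              have hiJ : j + 1 ≤ J i := by
                have := (Finset.mem_filter.mp hi).2
                omega
              have h1 : l (j + 1) ≤ l (J i) :=
                levels_mono hl hiJ (by have := hJs i; omega)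
              have h2 : l (J i) ≤ r i := hBr i
              have : l (j+1) ≤ r i := h1.trans h2
              exact pow_le_pow_left₀ hc.le this 2
          _ ≤ ∑ i, (r i)^2 :=
              Finset.sum_le_sum_of_subset_of_nonneg (Finset.subset_univ T)
                (fun i _ _ => sq_nonneg _)
          _ = 1 := hrsum
      rw [show (1 / l (j+1))^2 = 1 / (l (j+1))^2 by rw [div_pow, one_pow]]
      rw [le_div_iff₀ (by positivity)]
      exact hbound
  -- the LP set is bounded above
  have hbdd : BddAbove {y : ℝ | ∃ x : ℕ → ℝ,
      (∀ j ≤ s, 0 ≤ x j) ∧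
      (∑ j ∈ Finset.range (s + 1), x j ≤ (d:ℝ)) ∧
      (∀ j < s, (d:ℝ) - ∑ k ∈ Finset.range (j + 1), x k ≤ (1 / l (j + 1)) ^ 2) ∧
      y = ∑ j ∈ Finset.range (s + 1), (l (j + 1) - l j) ^ 2 * x j / 4} := by
    refine ⟨(d:ℝ) / 4, fun y hy => ?_⟩
    obtain ⟨z, hz0, hzsum, -, hyz⟩ := hy
    rw [hyz]
    have h1 : ∀ j ∈ Finset.range (s + 1),
        (l (j + 1) - l j)^2 * z j / 4 ≤ z j / 4 := by
      intro j hj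
      have hjs : j ≤ s := Nat.lt_succ_iff.mp (Finset.mem_range.mp hj)
      have hz : 0 ≤ z j := hz0 j hjs
      have hlj0 : 0 ≤ l j := by
        have := levels_mono hl (Nat.zero_le j) (by omega)
        rw [hl.1] at this; exact this
      have hlj1 : l (j + 1) ≤ 1 := by
        have := levels_mono hl (Nat.succ_le_succ hjs) le_rfl
        rw [hl.2.1] at this; exact this
      have hmono : l j ≤ l (j + 1) := (hl.2.2 j hjs).le
      have hτ : (l (j + 1) - l j)^2 ≤ 1 := by nlinarith
      nlinarith
    calc ∑ j ∈ Finset.range (s + 1), (l (j + 1) - l j)^2 * z j / 4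
        ≤ ∑ j ∈ Finset.range (s + 1), z j / 4 := Finset.sum_le_sum h1
      _ = (∑ j ∈ Finset.range (s + 1), z j) / 4 := by rw [Finset.sum_div]
      _ ≤ (d:ℝ) / 4 := by linarith
  -- put it together
  calc (∫ u, ‖quant l s v u - v‖ ^ 2 ∂(unifCube d))
      = ∑ i, (p i * C i + (1 - p i) * D i) := hint
    _ ≤ ∑ i, N^2 * (A i - B i)^2 / 4 := Finset.sum_le_sum fun i _ => hcoord i
    _ = ∑ j ∈ Finset.range (s + 1), (l (j + 1) - l j)^2 * x j / 4 * N^2 := hfiber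
    _ = (∑ j ∈ Finset.range (s + 1), (l (j + 1) - l j)^2 * x j / 4) * N^2 := by
        rw [Finset.sum_mul]
    _ ≤ sSup {y : ℝ | ∃ x : ℕ → ℝ,
        (∀ j ≤ s, 0 ≤ x j) ∧
        (∑ j ∈ Finset.range (s + 1), x j ≤ (d:ℝ)) ∧
        (∀ j < s, (d:ℝ) - ∑ k ∈ Finset.range (j + 1), x k ≤ (1 / l (j + 1)) ^ 2) ∧
        y = ∑ j ∈ Finset.range (s + 1), (l (j + 1) - l j) ^ 2 * x j / 4} * N^2 :=
        mul_le_mul_of_nonneg_right (le_csSup hbdd hy) (sq_nonneg N)
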